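/- Gentle operator lemma for ensembles: Let 𝒳 be a finite set, p a probability distribution on 𝒳, and (ρ_x)_{x∈𝒳} density matrices on ℂ^d with average ρ̄ := ∑_x p(x) ρ_x. Let Λ be a d×d complex matrix with 0 ≤ Λ ≤ I и suppose Tr[Λρ̄] ≥ 1 − ε for some ε ∈ [0,1]. Then ∑_{x∈𝒳} p(x) ‖√Λ ρ_x √Λ − ρ_x‖₁ ≤ 2√ε, where √Λ denotes the positive semidefinite square root of Λ. -/

import Mathlib

open scoped BigOperators ComplexOrder

/-- The positive semidefinite square root of a positive semidefinite matrix
(the definition removed from Mathlib, restored verbatim). -/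
noncomputable def Matrix.PosSemidef.sqrt {n : Type*} [Fintype n] [DecidableEq n] {𝕜 : Type*}
    [RCLike 𝕜] {A : Matrix n n 𝕜} (hA : A.PosSemidef) : Matrix n n 𝕜 :=
  hA.1.eigenvectorUnitary.1 * Matrix.diagonal ((↑) ∘ (√·) ∘ hA.1.eigenvalues) *
  (star hA.1.eigenvectorUnitary : Matrix n n 𝕜)

/-- Trace norm `‖A‖₁ = Tr √(AᴴA)` of a complex square matrix. -/
noncomputable def traceNorm {ι : Type*} [Fintype ι] [DecidableEq ι] (A : Matrix ι ι ℂ) : ℝ :=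
  (Matrix.posSemidef_conjTranspose_mul_self A).sqrt.trace.re

namespace Matrix.PosSemidef

variable {n : Type*} [Fintype n] [DecidableEq n]

lemma sqrt_eq_cfc {A : Matrix n n ℂ} (hA : A.PosSemidef) : hA.sqrt = cfc Real.sqrt A := by
  rw [hA.1.cfc_eq, IsHermitian.cfc, Unitary.conjStarAlgAut_apply]
  rfl

lemma spec_nonneg {A : Matrix n n ℂ} (hA : A.PosSemidef) {x : ℝ} (hx : x ∈ spectrum ℝ A) :
    0 ≤ x := by
  rw [hA.1.spectrum_real_eq_range_eigenvalues] at hx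
  obtain ⟨i, rfl⟩ := hx
  exact hA.eigenvalues_nonneg i

lemma posSemidef_sqrt {A : Matrix n n ℂ} (hA : A.PosSemidef) : hA.sqrt.PosSemidef := by
  unfold Matrix.PosSemidef.sqrt
  rw [Matrix.star_eq_conjTranspose]
  refine Matrix.PosSemidef.mul_mul_conjTranspose_same ?_ _
  refine Matrix.PosSemidef.diagonal fun i => ?_
  exact Complex.zero_le_real.2 (Real.sqrt_nonneg _)

lemma sqrt_mul_self {A : Matrix n n ℂ} (hA : A.PosSemidef) : hA.sqrt * hA.sqrt = A := by
  have hsa : IsSelfAdjoint A := hA.1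
  rw [sqrt_eq_cfc, ← cfc_mul Real.sqrt Real.sqrt A]
  conv_rhs => rw [← cfc_id' ℝ A]
  exact cfc_congr fun x hx => Real.mul_self_sqrt (spec_nonneg hA hx)

lemma eq_sqrt_of_sq_eq {A B : Matrix n n ℂ} (hB : B.PosSemidef) (hA : A.PosSemidef)
    (h : B ^ 2 = A) : B = hA.sqrt := by
  have hsb : IsSelfAdjoint B := hB.1
  rw [sqrt_eq_cfc, ← h, ← cfc_pow_id (R := ℝ) B 2, ← cfc_comp' Real.sqrt (fun x : ℝ => x ^ 2) B]
  conv_lhs => rw [← cfc_id' ℝ B]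
  exact cfc_congr fun x hx => (Real.sqrt_sq (spec_nonneg hB hx)).symm

end Matrix.PosSemidef

namespace GentleAux

open Matrix

variable {ι : Type*} [Fintype ι] [DecidableEq ι]

/-- Cauchy–Schwarz for a diagonal entry of a product. -/
lemma cs_entry (A B : Matrix ι ι ℂ) (i : ι) :
    ‖(A * B) i i‖ ≤ Real.sqrt (∑ j, ‖A i j‖ ^ 2) * Real.sqrt (∑ j, ‖B j i‖ ^ 2) := by
  classical
  let a : EuclideanSpace ℂ ι := (WithLp.equiv 2 _).symm (fun j => (starRingEnd ℂ) (A i j))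
  let b : EuclideanSpace ℂ ι := (WithLp.equiv 2 _).symm (fun j => B j i)
  have h1 : (A * B) i i = inner ℂ a b := by
    simp only [Matrix.mul_apply, PiLp.inner_apply, RCLike.inner_apply, a, b,
      WithLp.equiv_symm_apply, PiLp.toLp_apply, RingHom.id_apply, starRingEnd_self_apply]
    exact Finset.sum_congr rfl fun j _ => mul_comm _ _
  have h2 : ‖inner ℂ a b‖ ≤ ‖a‖ * ‖b‖ := norm_inner_le_norm a b
  have ha : ‖a‖ = Real.sqrt (∑ j, ‖A i j‖ ^ 2) := by
    rw [EuclideanSpace.norm_eq]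
    refine congrArg Real.sqrt (Finset.sum_congr rfl fun j _ => ?_)
    simp [a, WithLp.equiv_symm_apply]
  have hb : ‖b‖ = Real.sqrt (∑ j, ‖B j i‖ ^ 2) := by
    rw [EuclideanSpace.norm_eq]
    refine congrArg Real.sqrt (Finset.sum_congr rfl fun j _ => ?_)
    simp [b, WithLp.equiv_symm_apply]
  rw [h1]
  rw [ha, hb] at h2
  exact h2

lemma sum_col_sq (A : Matrix ι ι ℂ) :
    ∑ i, ∑ j, ‖A j i‖ ^ 2 = (Aᴴ * A).trace.re := by
  rw [Matrix.trace, Complex.re_sum]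
  refine Finset.sum_congr rfl fun i _ => ?_
  rw [Matrix.diag_apply, Matrix.mul_apply, Complex.re_sum]
  refine Finset.sum_congr rfl fun j _ => ?_
  rw [Matrix.conjTranspose_apply, mul_comm,
    show (star (A j i)) = (starRingEnd ℂ) (A j i) from rfl, Complex.mul_conj,
    Complex.ofReal_re, Complex.normSq_eq_norm_sq]

lemma sum_row_sq (A : Matrix ι ι ℂ) :
    ∑ i, ∑ j, ‖A i j‖ ^ 2 = (A * Aᴴ).trace.re := by
  have := sum_col_sq Aᴴ
  simp only [conjTranspose_conjTranspose] at this
  rw [← this]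
  refine Finset.sum_congr rfl fun i _ => Finset.sum_congr rfl fun j _ => ?_
  rw [Matrix.conjTranspose_apply]
  simp

lemma trace_re_nonneg {A : Matrix ι ι ℂ} (hA : A.PosSemidef) : 0 ≤ A.trace.re := by
  have h : A = hA.sqrtᴴ * hA.sqrt := by
    rw [hA.posSemidef_sqrt.1, hA.sqrt_mul_self]
  rw [h, ← sum_col_sq]
  positivity

lemma trace_mul_psd_nonneg {A B : Matrix ι ι ℂ} (hA : A.PosSemidef) (hB : B.PosSemidef) :
    0 ≤ (A * B).trace.re := by
  have h : (A * B).trace = (hB.sqrt * A * hB.sqrtᴴ).trace := by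
    rw [hB.posSemidef_sqrt.1]
    conv_lhs => rw [← hB.sqrt_mul_self]
    rw [← mul_assoc, Matrix.trace_mul_cycle]
  rw [h]
  exact trace_re_nonneg (hA.mul_mul_conjTranspose_same hB.sqrt)

lemma trace_conj_unitary (U M : Matrix ι ι ℂ) (hU : U * star U = 1) :
    (star U * M * U).trace = M.trace := by
  rw [Matrix.trace_mul_cycle, hU, one_mul]

/-- trace norm of a Hermitian matrix is the sum of the absolute values of eigenvalues. -/
lemma traceNorm_hermitian {H : Matrix ι ι ℂ} (hH : H.IsHermitian) :
    traceNorm H = ∑ i, |hH.eigenvalues i| := by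
  set U : Matrix ι ι ℂ := (hH.eigenvectorUnitary : Matrix ι ι ℂ) with hUdef
  have hU : U * star U = 1 := Matrix.mem_unitaryGroup_iff.mp hH.eigenvectorUnitary.2
  have hU' : star U * U = 1 := Matrix.mem_unitaryGroup_iff'.mp hH.eigenvectorUnitary.2
  set d : ι → ℂ := fun i => ((|hH.eigenvalues i| : ℝ) : ℂ) with hd
  set T : Matrix ι ι ℂ := U * diagonal d * star U with hT
  have hdpsd : (diagonal d).PosSemidef := by
    refine PosSemidef.diagonal fun i => ?_
    exact Complex.zero_le_real.2 (abs_nonneg _)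
  have hTpsd : T.PosSemidef := by
    rw [hT, Matrix.star_eq_conjTranspose]
    exact hdpsd.mul_mul_conjTranspose_same U
  have hdd : diagonal d * diagonal d =
      diagonal (RCLike.ofReal ∘ hH.eigenvalues) * diagonal (RCLike.ofReal ∘ hH.eigenvalues) := by
    rw [diagonal_mul_diagonal, diagonal_mul_diagonal]
    refine congrArg diagonal (funext fun i => ?_)
    show ((|hH.eigenvalues i| : ℝ) : ℂ) * ((|hH.eigenvalues i| : ℝ) : ℂ) = _
    rw [← Complex.ofReal_mul, abs_mul_abs_self, Complex.ofReal_mul]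
    rfl
  have hsq : ∀ (D : Matrix ι ι ℂ), (U * D * star U) * (U * D * star U) = U * (D * D) * star U := by
    intro D
    have h1 : U * D * star U * (U * D * star U) = U * D * ((star U * U) * (D * star U)) := by
      simp only [Matrix.mul_assoc]
    rw [h1, hU', one_mul, ← Matrix.mul_assoc, ← Matrix.mul_assoc]
  have hRHS : Hᴴ * H = U * ((diagonal (RCLike.ofReal ∘ hH.eigenvalues)) *
      diagonal (RCLike.ofReal ∘ hH.eigenvalues)) * star U := by
    rw [hH]
    conv_lhs => rw [hH.spectral_theorem]
    exact hsq _
  have hT2 : T ^ 2 = Hᴴ * H := by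
    rw [pow_two, hT, hsq, hdd, hRHS]
  have hTsqrt : T = (Matrix.posSemidef_conjTranspose_mul_self H).sqrt :=
    hTpsd.eq_sqrt_of_sq_eq _ hT2
  have htrace : T.trace = ∑ i, d i := by
    rw [hT, Matrix.trace_mul_cycle, hU', one_mul, Matrix.trace_diagonal]
  rw [traceNorm, ← hTsqrt, htrace, Complex.re_sum]
  exact Finset.sum_congr rfl fun i _ => Complex.ofReal_re _

lemma sum_sqrt_cs (g h : ι → ℝ) (hg : ∀ i, 0 ≤ g i) (hh : ∀ i, 0 ≤ h i) :
    ∑ i, g i * h i ≤ Real.sqrt (∑ i, g i ^ 2) * Real.sqrt (∑ i, h i ^ 2) := by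
  have h2 := Finset.sum_mul_sq_le_sq_mul_sq Finset.univ g h
  have h3 : ∑ i, g i * h i ≤ Real.sqrt ((∑ i, g i ^ 2) * (∑ i, h i ^ 2)) := by
    rw [← Real.sqrt_sq (Finset.sum_nonneg fun i _ => mul_nonneg (hg i) (hh i))]
    exact Real.sqrt_le_sqrt h2
  rwa [Real.sqrt_mul (Finset.sum_nonneg fun i _ => sq_nonneg _)] at h3

/-- Key decomposition bound on the trace norm of a Hermitian matrix. -/
lemma traceNorm_decomp_le (H M₁ N₁ M₂ N₂ : Matrix ι ι ℂ) (hH : H.IsHermitian)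
    (hdec : H = M₁ * N₁ + M₂ * N₂) :
    traceNorm H ≤ Real.sqrt ((M₁ * M₁ᴴ).trace.re) * Real.sqrt ((N₁ᴴ * N₁).trace.re)
      + Real.sqrt ((M₂ * M₂ᴴ).trace.re) * Real.sqrt ((N₂ᴴ * N₂).trace.re) := by
  classical
  set U : Matrix ι ι ℂ := (hH.eigenvectorUnitary : Matrix ι ι ℂ) with hUdef
  have hU : U * star U = 1 := Matrix.mem_unitaryGroup_iff.mp hH.eigenvectorUnitary.2
  have hU' : star U * U = 1 := Matrix.mem_unitaryGroup_iff'.mp hH.eigenvectorUnitary.2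
  have hdiag : star U * H * U = diagonal (RCLike.ofReal ∘ hH.eigenvalues) :=
    by
      conv_lhs => rw [hH.spectral_theorem]
      rw [Unitary.conjStarAlgAut_apply, ← Matrix.mul_assoc, ← Matrix.mul_assoc, hU', Matrix.one_mul,
        Matrix.mul_assoc, hU', Matrix.mul_one]
  set g₁ : ι → ℝ := fun i => Real.sqrt (∑ j, ‖(star U * M₁) i j‖ ^ 2) with hg₁
  set h₁ : ι → ℝ := fun i => Real.sqrt (∑ j, ‖(N₁ * U) j i‖ ^ 2) with hh₁
  set g₂ : ι → ℝ := fun i => Real.sqrt (∑ j, ‖(star U * M₂) i j‖ ^ 2) with hg₂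
  set h₂ : ι → ℝ := fun i => Real.sqrt (∑ j, ‖(N₂ * U) j i‖ ^ 2) with hh₂
  have key : ∀ i, |hH.eigenvalues i| ≤ g₁ i * h₁ i + g₂ i * h₂ i := by
    intro i
    have h0 : (RCLike.ofReal (hH.eigenvalues i) : ℂ) = (star U * H * U) i i := by
      rw [hdiag]
      simp [Matrix.diagonal_apply_eq]
    have habs : |hH.eigenvalues i| = ‖(star U * H * U) i i‖ := by
      rw [← h0, RCLike.norm_ofReal]
    rw [habs, hdec]
    have hsplit : star U * (M₁ * N₁ + M₂ * N₂) * U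
        = (star U * M₁) * (N₁ * U) + (star U * M₂) * (N₂ * U) := by
      noncomm_ring
    rw [hsplit, Matrix.add_apply]
    calc ‖((star U * M₁) * (N₁ * U)) i i + ((star U * M₂) * (N₂ * U)) i i‖
        ≤ ‖((star U * M₁) * (N₁ * U)) i i‖ + ‖((star U * M₂) * (N₂ * U)) i i‖ :=
          norm_add_le _ _
      _ ≤ g₁ i * h₁ i + g₂ i * h₂ i := add_le_add (cs_entry _ _ i) (cs_entry _ _ i)
  have hrow : ∀ M : Matrix ι ι ℂ,
      ∑ i, (∑ j, ‖(star U * M) i j‖ ^ 2) = (M * Mᴴ).trace.re := by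
    intro M
    rw [sum_row_sq]
    have h1 : (star U * M) * (star U * M)ᴴ = star U * (M * Mᴴ) * U := by
      rw [Matrix.conjTranspose_mul]
      simp only [Matrix.star_eq_conjTranspose, Matrix.conjTranspose_conjTranspose,
        Matrix.mul_assoc]
    rw [h1, trace_conj_unitary _ _ hU]
  have hcol : ∀ N : Matrix ι ι ℂ,
      ∑ i, (∑ j, ‖(N * U) j i‖ ^ 2) = (Nᴴ * N).trace.re := by
    intro N
    rw [sum_col_sq]
    have h1 : (N * U)ᴴ * (N * U) = star U * (Nᴴ * N) * U := by
      rw [Matrix.conjTranspose_mul]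
      simp only [Matrix.star_eq_conjTranspose, Matrix.mul_assoc]
    rw [h1, trace_conj_unitary _ _ hU]
  have hsum1 : ∑ i, g₁ i ^ 2 = (M₁ * M₁ᴴ).trace.re := by
    rw [← hrow M₁]
    exact Finset.sum_congr rfl fun i _ => Real.sq_sqrt
      (Finset.sum_nonneg fun j _ => sq_nonneg _)
  have hsum2 : ∑ i, h₁ i ^ 2 = (N₁ᴴ * N₁).trace.re := by
    rw [← hcol N₁]
    exact Finset.sum_congr rfl fun i _ => Real.sq_sqrt
      (Finset.sum_nonneg fun j _ => sq_nonneg _)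
  have hsum3 : ∑ i, g₂ i ^ 2 = (M₂ * M₂ᴴ).trace.re := by
    rw [← hrow M₂]
    exact Finset.sum_congr rfl fun i _ => Real.sq_sqrt
      (Finset.sum_nonneg fun j _ => sq_nonneg _)
  have hsum4 : ∑ i, h₂ i ^ 2 = (N₂ᴴ * N₂).trace.re := by
    rw [← hcol N₂]
    exact Finset.sum_congr rfl fun i _ => Real.sq_sqrt
      (Finset.sum_nonneg fun j _ => sq_nonneg _)
  calc traceNorm H = ∑ i, |hH.eigenvalues i| := traceNorm_hermitian hH
    _ ≤ ∑ i, (g₁ i * h₁ i + g₂ i * h₂ i) := Finset.sum_le_sum fun i _ => key i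
    _ = ∑ i, g₁ i * h₁ i + ∑ i, g₂ i * h₂ i := Finset.sum_add_distrib
    _ ≤ Real.sqrt (∑ i, g₁ i ^ 2) * Real.sqrt (∑ i, h₁ i ^ 2)
        + Real.sqrt (∑ i, g₂ i ^ 2) * Real.sqrt (∑ i, h₂ i ^ 2) :=
        add_le_add
          (sum_sqrt_cs _ _ (fun i => Real.sqrt_nonneg _) (fun i => Real.sqrt_nonneg _))
          (sum_sqrt_cs _ _ (fun i => Real.sqrt_nonneg _) (fun i => Real.sqrt_nonneg _))
    _ = _ := by rw [hsum1, hsum2, hsum3, hsum4]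

end GentleAux

namespace GentleAux2
open Matrix GentleAux

variable {ι : Type*} [Fintype ι] [DecidableEq ι]

lemma one_sub_sqrt_psd {Λ : Matrix ι ι ℂ} (hΛ : Λ.PosSemidef)
    (hΛ1 : ((1 : Matrix ι ι ℂ) - Λ).PosSemidef) :
    ((1 : Matrix ι ι ℂ) - hΛ.sqrt).PosSemidef := by
  classical
  have hev : ∀ i, hΛ.1.eigenvalues i ≤ 1 := by
    intro i
    set v : EuclideanSpace ℂ ι := hΛ.1.eigenvectorBasis i with hv
    have hvv : dotProduct (star (v : ι → ℂ)) (v : ι → ℂ) = 1 := by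
      have h1 : (inner ℂ v v : ℂ) = dotProduct (star (v : ι → ℂ)) (v : ι → ℂ) :=
        (EuclideanSpace.inner_eq_star_dotProduct v v).trans (dotProduct_comm _ _)
      rw [← h1, inner_self_eq_norm_sq_to_K, hΛ.1.eigenvectorBasis.orthonormal.1 i]
      norm_num
    have h2 := hΛ1.re_dotProduct_nonneg (v : ι → ℂ)
    rw [Matrix.sub_mulVec, Matrix.one_mulVec, dotProduct_sub, map_sub, hvv] at h2
    have h3 : hΛ.1.eigenvalues i
        = RCLike.re (dotProduct (star (v : ι → ℂ)) (Λ *ᵥ (v : ι → ℂ))) :=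
      hΛ.1.eigenvalues_eq i
    have h4 : RCLike.re (1 : ℂ) = (1 : ℝ) := by norm_num
    rw [h4] at h2
    linarith [h2, h3]
  set U : Matrix ι ι ℂ := (hΛ.1.eigenvectorUnitary : Matrix ι ι ℂ) with hUdef
  have hU : U * star U = 1 := Matrix.mem_unitaryGroup_iff.mp hΛ.1.eigenvectorUnitary.2
  set D : Matrix ι ι ℂ := diagonal ((↑) ∘ Real.sqrt ∘ hΛ.1.eigenvalues) with hD
  have hSdef : hΛ.sqrt = U * D * star U := rfl
  have h1 : (1 : Matrix ι ι ℂ) - hΛ.sqrt = U * (1 - D) * star U := by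
    have e1 : U * (1 - D) * star U = U * star U - U * D * star U := by noncomm_ring
    rw [e1, hU, hSdef]
  rw [h1, Matrix.star_eq_conjTranspose]
  refine PosSemidef.mul_mul_conjTranspose_same ?_ U
  have h2 : (1 : Matrix ι ι ℂ) - D = diagonal (fun i => 1 - ((Real.sqrt (hΛ.1.eigenvalues i) : ℝ) : ℂ)) := by
    rw [hD, ← Matrix.diagonal_one, Matrix.diagonal_sub]
    rfl
  rw [h2]
  refine PosSemidef.diagonal fun i => ?_
  have : (1 : ℂ) - ((Real.sqrt (hΛ.1.eigenvalues i) : ℝ) : ℂ)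
      = (((1 - Real.sqrt (hΛ.1.eigenvalues i) : ℝ)) : ℂ) := by push_cast; ring
  rw [this]
  exact Complex.zero_le_real.2 (by
    have := Real.sqrt_le_one (x := hΛ.1.eigenvalues i) |>.mpr (hev i)
    linarith)

/-- The gentle operator bound for a single state. -/
lemma single_state (Λ ρ : Matrix ι ι ℂ) (hΛ : Λ.PosSemidef)
    (hΛ1 : ((1 : Matrix ι ι ℂ) - Λ).PosSemidef)
    (hρ : ρ.PosSemidef) (hρtr : ρ.trace = 1) :
    traceNorm (hΛ.sqrt * ρ * hΛ.sqrt - ρ)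
      ≤ 2 * Real.sqrt ((((1 : Matrix ι ι ℂ) - Λ) * ρ).trace.re) := by
  classical
  set S : Matrix ι ι ℂ := hΛ.sqrt with hSdef
  have hS : S.PosSemidef := hΛ.posSemidef_sqrt
  have hSH : Sᴴ = S := hS.1
  have hSS : S * S = Λ := hΛ.sqrt_mul_self
  have h1S : ((1 : Matrix ι ι ℂ) - S).PosSemidef := one_sub_sqrt_psd hΛ hΛ1
  set R : Matrix ι ι ℂ := hρ.sqrt with hRdef
  have hRH : Rᴴ = R := hρ.posSemidef_sqrt.1
  have hRR : R * R = ρ := hρ.sqrt_mul_self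
  set εx : ℝ := ((((1 : Matrix ι ι ℂ) - Λ)) * ρ).trace.re with hεx
  have hεx0 : 0 ≤ εx := trace_mul_psd_nonneg hΛ1 hρ
  have e1 : ((((1 : Matrix ι ι ℂ) - Λ)) * ρ).trace = 1 - (Λ * ρ).trace := by
    rw [Matrix.sub_mul, Matrix.one_mul, Matrix.trace_sub, hρtr]
  have hΛρre : (Λ * ρ).trace.re = 1 - εx := by
    have := congrArg Complex.re e1
    rw [Complex.sub_re, Complex.one_re] at this
    rw [hεx]; linarith [this]
  have hΛρ0 : 0 ≤ (Λ * ρ).trace.re := trace_mul_psd_nonneg hΛ hρ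
  -- decomposition
  have hH : (S * ρ * S - ρ).IsHermitian := by
    show (S * ρ * S - ρ)ᴴ = S * ρ * S - ρ
    rw [Matrix.conjTranspose_sub, Matrix.conjTranspose_mul, Matrix.conjTranspose_mul,
      hSH, hρ.1]
    rw [Matrix.mul_assoc]
  have hdec : S * ρ * S - ρ = (S * R) * (R * (S - 1)) + ((S - 1) * R) * R := by
    have : (S * R) * (R * (S - 1)) + ((S - 1) * R) * R
        = S * (R * R) * (S - 1) + (S - 1) * (R * R) := by noncomm_ring
    rw [this, hRR]
    noncomm_ring
  have key := traceNorm_decomp_le (S * ρ * S - ρ) (S * R) (R * (S - 1)) ((S - 1) * R) R hH hdec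
  -- trace identities
  have t1 : ((S * R) * (S * R)ᴴ).trace = (Λ * ρ).trace := by
    rw [Matrix.conjTranspose_mul, hRH, hSH]
    have : (S * R) * (R * S) = S * ρ * S := by
      rw [← hRR]; noncomm_ring
    rw [this, Matrix.trace_mul_cycle, hSS]
  set T : ℝ := ((S - 1) * ρ * (S - 1)).trace.re with hTdef
  have hsub : (S - 1)ᴴ = S - 1 := by
    rw [Matrix.conjTranspose_sub, Matrix.conjTranspose_one, hSH]
  have t2 : ((R * (S - 1))ᴴ * (R * (S - 1))).trace = ((S - 1) * ρ * (S - 1)).trace := by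
    rw [Matrix.conjTranspose_mul, hsub, hRH]
    refine congrArg Matrix.trace ?_
    rw [← hRR]; noncomm_ring
  have t3 : (((S - 1) * R) * ((S - 1) * R)ᴴ).trace = ((S - 1) * ρ * (S - 1)).trace := by
    rw [Matrix.conjTranspose_mul, hsub, hRH]
    refine congrArg Matrix.trace ?_
    rw [← hRR]; noncomm_ring
  have t4 : (Rᴴ * R).trace = 1 := by rw [hRH, hRR, hρtr]
  -- T ≤ εx
  have hTle : T ≤ εx := by
    set D : Matrix ι ι ℂ := (1 - Λ) - (S - 1) * (S - 1) with hDdef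
    have hDpsd : D.PosSemidef := by
      set W : Matrix ι ι ℂ := hS.sqrt with hW
      have hWH : Wᴴ = W := hS.posSemidef_sqrt.1
      have hWW : W * W = S := hS.sqrt_mul_self
      have hcomm : W * S = S * W := by
        rw [← hWW, Matrix.mul_assoc]
      have hE : W * (1 - S) * Wᴴ = S - Λ := by
        rw [hWH]
        have : W * (1 - S) * W = W * W - W * S * W := by noncomm_ring
        rw [this, hWW, hcomm, Matrix.mul_assoc, hWW, hSS]
      have hD2 : D = (W * (1 - S) * Wᴴ) + (W * (1 - S) * Wᴴ) := by
        rw [hE, hDdef, ← hSS]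
        noncomm_ring
      rw [hD2]
      exact (h1S.mul_mul_conjTranspose_same W).add (h1S.mul_mul_conjTranspose_same W)
    have hcyc : ((S - 1) * ρ * (S - 1)).trace = (((S - 1) * (S - 1)) * ρ).trace := by
      rw [Matrix.trace_mul_cycle, Matrix.mul_assoc]
    have hdtr : (D * ρ).trace = ((1 - Λ) * ρ).trace - ((S - 1) * (S - 1) * ρ).trace := by
      rw [hDdef, Matrix.sub_mul, Matrix.trace_sub]
    have h0 := trace_mul_psd_nonneg hDpsd hρ
    rw [hdtr, Complex.sub_re] at h0
    rw [hTdef, hcyc]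
    rw [hεx]
    linarith
  have hT0 : 0 ≤ T := by
    rw [hTdef]
    have : (S - 1) * ρ * (S - 1) = (S - 1) * ρ * (S - 1)ᴴ := by rw [hsub]
    rw [this]
    exact trace_re_nonneg (hρ.mul_mul_conjTranspose_same (S - 1))
  -- combine
  rw [t1, t2, t3, t4] at key
  have hb1 : Real.sqrt ((Λ * ρ).trace.re) ≤ 1 := by
    rw [Real.sqrt_le_one]
    rw [hΛρre]; linarith
  have hone : ((1 : ℂ)).re = (1 : ℝ) := Complex.one_re
  rw [hone, Real.sqrt_one, mul_one] at key
  have hTre : ((S - 1) * ρ * (S - 1)).trace.re = T := rfl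
  rw [hTre] at key
  have hsT : Real.sqrt T ≤ Real.sqrt εx := Real.sqrt_le_sqrt hTle
  calc traceNorm (S * ρ * S - ρ)
      ≤ Real.sqrt ((Λ * ρ).trace.re) * Real.sqrt T + Real.sqrt T := key
    _ ≤ 1 * Real.sqrt T + Real.sqrt T := by
        have := mul_le_mul_of_nonneg_right hb1 (Real.sqrt_nonneg T)
        linarith
    _ = 2 * Real.sqrt T := by ring
    _ ≤ 2 * Real.sqrt εx := by linarith

end GentleAux2

/-- Gentle operator lemma for ensembles: if `0 ≤ Λ ≤ I` has overlap at least `1 − ε` with the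
average state `ρ̄ = ∑ₓ p(x) ρₓ`, then on average `√Λ ρₓ √Λ` is `2√ε`-close to `ρₓ` in trace
distance. -/
theorem gentle_operator_ensemble {X : Type*} [Fintype X] {d : ℕ}
    (p : X → ℝ) (hp : ∀ x, 0 ≤ p x) (hpsum : ∑ x, p x = 1)
    (ρ : X → Matrix (Fin d) (Fin d) ℂ)
    (hρ : ∀ x, (ρ x).PosSemidef ∧ (ρ x).trace = 1)
    (Λ : Matrix (Fin d) (Fin d) ℂ) (hΛ : Λ.PosSemidef)
    (hΛ1 : ((1 : Matrix (Fin d) (Fin d) ℂ) - Λ).PosSemidef)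
    (ε : ℝ) (hε0 : 0 ≤ ε) (hε1 : ε ≤ 1)
    (htr : 1 - ε ≤ (Λ * ∑ x, (p x : ℂ) • ρ x).trace.re) :
    ∑ x, p x * traceNorm (hΛ.sqrt * ρ x * hΛ.sqrt - ρ x) ≤ 2 * Real.sqrt ε := by
  classical
  set ε' : X → ℝ := fun x => ((((1 : Matrix (Fin d) (Fin d) ℂ) - Λ)) * ρ x).trace.re with hε'
  have hε'0 : ∀ x, 0 ≤ ε' x := fun x => GentleAux.trace_mul_psd_nonneg hΛ1 (hρ x).1
  -- step 1: per-state bound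
  have step1 : ∀ x, p x * traceNorm (hΛ.sqrt * ρ x * hΛ.sqrt - ρ x)
      ≤ p x * (2 * Real.sqrt (ε' x)) := fun x =>
    mul_le_mul_of_nonneg_left
      (GentleAux2.single_state Λ (ρ x) hΛ hΛ1 (hρ x).1 (hρ x).2) (hp x)
  -- step 2: average of ε' is at most ε
  have havg : ∑ x, p x * ε' x ≤ ε := by
    have htrace_sum : (Λ * ∑ x, (p x : ℂ) • ρ x).trace = ∑ x, (p x : ℂ) * (Λ * ρ x).trace := by
      rw [Finset.mul_sum, Matrix.trace_sum]
      refine Finset.sum_congr rfl fun x _ => ?_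
      rw [Matrix.mul_smul, Matrix.trace_smul, smul_eq_mul]
    have hre : (Λ * ∑ x, (p x : ℂ) • ρ x).trace.re = ∑ x, p x * (Λ * ρ x).trace.re := by
      rw [htrace_sum, Complex.re_sum]
      exact Finset.sum_congr rfl fun x _ => Complex.re_ofReal_mul _ _
    have hεx_eq : ∀ x, ε' x = 1 - (Λ * ρ x).trace.re := by
      intro x
      have e1 : ((((1 : Matrix (Fin d) (Fin d) ℂ) - Λ)) * ρ x).trace = 1 - (Λ * ρ x).trace := by
        rw [Matrix.sub_mul, Matrix.one_mul, Matrix.trace_sub, (hρ x).2]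
      have := congrArg Complex.re e1
      rw [Complex.sub_re, Complex.one_re] at this
      simpa [hε'] using this
    have hsum : ∑ x, p x * ε' x = 1 - ∑ x, p x * (Λ * ρ x).trace.re := by
      rw [← hpsum, ← Finset.sum_sub_distrib]
      refine Finset.sum_congr rfl fun x _ => ?_
      rw [hεx_eq x]; ring
    rw [hsum, ← hre]
    linarith [htr]
  -- step 3: Cauchy-Schwarz on the average
  have step3 : ∑ x, p x * Real.sqrt (ε' x) ≤ Real.sqrt ε := by
    have hcs := Finset.sum_mul_sq_le_sq_mul_sq Finset.univ
      (fun x => Real.sqrt (p x)) (fun x => Real.sqrt (p x) * Real.sqrt (ε' x))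
    have h1 : ∀ x : X, Real.sqrt (p x) * (Real.sqrt (p x) * Real.sqrt (ε' x))
        = p x * Real.sqrt (ε' x) := by
      intro x
      rw [← mul_assoc, Real.mul_self_sqrt (hp x)]
    have h2 : ∀ x : X, Real.sqrt (p x) ^ 2 = p x := fun x => Real.sq_sqrt (hp x)
    have h3 : ∀ x : X, (Real.sqrt (p x) * Real.sqrt (ε' x)) ^ 2 = p x * ε' x := by
      intro x
      rw [mul_pow, Real.sq_sqrt (hp x), Real.sq_sqrt (hε'0 x)]
    simp only [h1, h2, h3] at hcs
    rw [hpsum, one_mul] at hcs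
    have h4 : (∑ x, p x * Real.sqrt (ε' x)) ^ 2 ≤ ε := le_trans hcs havg
    have h5 : 0 ≤ ∑ x, p x * Real.sqrt (ε' x) :=
      Finset.sum_nonneg fun x _ => mul_nonneg (hp x) (Real.sqrt_nonneg _)
    calc ∑ x, p x * Real.sqrt (ε' x)
        = Real.sqrt ((∑ x, p x * Real.sqrt (ε' x)) ^ 2) := (Real.sqrt_sq h5).symm
      _ ≤ Real.sqrt ε := Real.sqrt_le_sqrt h4
  calc ∑ x, p x * traceNorm (hΛ.sqrt * ρ x * hΛ.sqrt - ρ x)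
      ≤ ∑ x, p x * (2 * Real.sqrt (ε' x)) := Finset.sum_le_sum fun x _ => step1 x
    _ = 2 * ∑ x, p x * Real.sqrt (ε' x) := by
        rw [Finset.mul_sum]
        exact Finset.sum_congr rfl fun x _ => by ring
    _ ≤ 2 * Real.sqrt ε := by linarith [step3]
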